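/- Let H(a) ≥ 0 be a bounded non-negative integral Hankel operator whose kernel a is positive, monotone decreasing and continuous on (0,∞). Then for every λ > 0, λ·a(λ) ≤ 2‖H(a)‖, where ‖·‖ is the operator norm on L^2(0,∞). -/

import Mathlib

open MeasureTheory Set
open scoped InnerProductSpace ComplexConjugate ENNReal

/-- For a bounded non-negative integral Hankel operator `H(a)` with kernel `a` positive,
decreasing and continuous on `(0,∞)`, one has `λ·a(λ) ≤ 2‖H(a)‖` for every `λ > 0`. -/
theorem pos_hankel_kernel_bound
    (a : ℝ → ℝ) (ha_pos : ∀ t, 0 < t → 0 < a t) (ha_mono : AntitoneOn a (Ioi 0))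
    (ha_cont : ContinuousOn a (Ioi 0))
    (T : Lp ℂ 2 (volume.restrict (Ioi (0:ℝ))) →L[ℂ] Lp ℂ 2 (volume.restrict (Ioi (0:ℝ))))
    (hT : ∀ f : Lp ℂ 2 (volume.restrict (Ioi (0:ℝ))),
      (T f : ℝ → ℂ) =ᵐ[volume.restrict (Ioi (0:ℝ))]
        fun t => ∫ s in Ioi (0:ℝ), (a (t + s) : ℂ) * f s)
    (hpos : ∀ f : Lp ℂ 2 (volume.restrict (Ioi (0:ℝ))), 0 ≤ (⟪T f, f⟫_ℂ).re)
    (lam : ℝ) (hlam : 0 < lam) :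
    lam * a lam ≤ 2 * ‖T‖ := by
  set c : ℝ := lam / 2 with hc
  have hc0 : 0 < c := by positivity
  have hmeas : MeasurableSet (Ioo (0:ℝ) c) := measurableSet_Ioo
  have hsub : Ioo (0:ℝ) c ∩ Ioi 0 = Ioo (0:ℝ) c :=
    inter_eq_left.mpr Ioo_subset_Ioi_self
  have hμIoo : (volume.restrict (Ioi (0:ℝ))) (Ioo 0 c) = ENNReal.ofReal c := by
    rw [Measure.restrict_apply hmeas, hsub, Real.volume_Ioo, sub_zero]
  have hμfin : (volume.restrict (Ioi (0:ℝ))) (Ioo 0 c) ≠ ⊤ := by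
    rw [hμIoo]; exact ENNReal.ofReal_ne_top
  set f : Lp ℂ 2 (volume.restrict (Ioi (0:ℝ))) :=
    indicatorConstLp 2 hmeas hμfin (1:ℂ) with hfdef
  set A : ℝ → ℝ := fun t => ∫ s in Ioo (0:ℝ) c, a (t + s) with hA
  -- pointwise computation of the integral against the indicator
  have hind : ∀ t : ℝ,
      (∫ s in Ioi (0:ℝ), (a (t + s) : ℂ) * (Ioo (0:ℝ) c).indicator (fun _ => (1:ℂ)) s)
        = ((A t : ℝ) : ℂ) := by
    intro t
    have heq : (fun s => (a (t + s) : ℂ) * (Ioo (0:ℝ) c).indicator (fun _ => (1:ℂ)) s)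
        = (Ioo (0:ℝ) c).indicator (fun s => ((a (t + s) : ℝ) : ℂ)) := by
      ext s; by_cases hs : s ∈ Ioo (0:ℝ) c <;> simp [hs]
    rw [heq, integral_indicator hmeas, Measure.restrict_restrict hmeas, hsub]
    exact integral_ofReal
  have hTf : (T f : ℝ → ℂ) =ᵐ[volume.restrict (Ioi (0:ℝ))] fun t => ((A t : ℝ) : ℂ) := by
    refine (hT f).trans (Filter.Eventually.of_forall fun t => ?_)
    dsimp only
    rw [← hind t]
    refine integral_congr_ae ?_
    filter_upwards [indicatorConstLp_coeFn (p := 2) (μ := volume.restrict (Ioi (0:ℝ)))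
      (hs := hmeas) (hμs := hμfin) (c := (1:ℂ))] with s hs
    rw [hs]
  have hcoe := indicatorConstLp_coeFn (p := 2) (μ := volume.restrict (Ioi (0:ℝ)))
      (hs := hmeas) (hμs := hμfin) (c := (1:ℂ))
  have hcongr : (fun t => RCLike.re ⟪(T f : ℝ → ℂ) t, (f : ℝ → ℂ) t⟫_ℂ)
      =ᵐ[volume.restrict (Ioi (0:ℝ))] (Ioo (0:ℝ) c).indicator A := by
    filter_upwards [hTf, hcoe] with t h1 h2
    rw [RCLike.inner_apply, h1, h2]
    by_cases ht : t ∈ Ioo (0:ℝ) c <;> simp [ht, Complex.conj_ofReal]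
  have hIntInner := L2.integrable_inner (𝕜 := ℂ) (T f) f
  have hIntInd : Integrable ((Ioo (0:ℝ) c).indicator A) (volume.restrict (Ioi (0:ℝ))) :=
    hIntInner.re.congr hcongr
  have hIntA : IntegrableOn A (Ioo (0:ℝ) c) volume := by
    have h1 : IntegrableOn A (Ioo (0:ℝ) c) (volume.restrict (Ioi (0:ℝ))) :=
      (integrable_indicator_iff hmeas).mp hIntInd
    rwa [IntegrableOn, Measure.restrict_restrict hmeas, hsub] at h1
  have hinner : (⟪T f, f⟫_ℂ).re = ∫ t in Ioo (0:ℝ) c, A t := by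
    have : (⟪T f, f⟫_ℂ).re = RCLike.re ⟪T f, f⟫_ℂ := rfl
    rw [this, L2.inner_def, ← integral_re hIntInner, integral_congr_ae hcongr,
      integral_indicator hmeas, Measure.restrict_restrict hmeas, hsub]
  -- lower bound for A t
  have hA_lb : ∀ t ∈ Ioo (0:ℝ) c, a lam * c ≤ A t := by
    intro t ht
    have hcont : ContinuousOn (fun s => a (t + s)) (Icc 0 c) := by
      refine ha_cont.comp ((continuous_const.add continuous_id).continuousOn) ?_
      intro s hs
      exact mem_Ioi.mpr (by nlinarith [hs.1, ht.1])
    have hint : IntegrableOn (fun s => a (t + s)) (Ioo 0 c) volume :=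
      (hcont.integrableOn_Icc).mono_set Ioo_subset_Icc_self
    have hconst : IntegrableOn (fun _ : ℝ => a lam) (Ioo 0 c) volume :=
      integrableOn_const measure_Ioo_lt_top.ne
    have h1 : (∫ _ in Ioo (0:ℝ) c, a lam) ≤ ∫ s in Ioo (0:ℝ) c, a (t + s) := by
      refine setIntegral_mono_on hconst hint hmeas ?_
      intro s hs
      refine ha_mono (mem_Ioi.mpr (by nlinarith [hs.1, ht.1])) (mem_Ioi.mpr hlam) ?_
      nlinarith [hs.2, ht.2]
    have h2 : (∫ _ in Ioo (0:ℝ) c, a lam) = a lam * c := by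
      rw [setIntegral_const, measureReal_def, Real.volume_Ioo, sub_zero, ENNReal.toReal_ofReal hc0.le,
        smul_eq_mul, mul_comm]
    rw [hA]; dsimp only; rw [← h2]; exact h1
  have hlb : a lam * c * c ≤ (⟪T f, f⟫_ℂ).re := by
    rw [hinner]
    have hconst : IntegrableOn (fun _ : ℝ => a lam * c) (Ioo 0 c) volume :=
      integrableOn_const measure_Ioo_lt_top.ne
    have h1 : (∫ _ in Ioo (0:ℝ) c, a lam * c) ≤ ∫ t in Ioo (0:ℝ) c, A t :=
      setIntegral_mono_on hconst hIntA hmeas hA_lb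
    have h2 : (∫ _ in Ioo (0:ℝ) c, a lam * c) = a lam * c * c := by
      rw [setIntegral_const, measureReal_def, Real.volume_Ioo, sub_zero, ENNReal.toReal_ofReal hc0.le,
        smul_eq_mul, mul_comm]
    linarith
  -- norm of f
  have hfn : ‖f‖ ^ 2 = c := by
    rw [hfdef, norm_indicatorConstLp (by norm_num) (by norm_num), measureReal_def, hμIoo,
      ENNReal.toReal_ofReal hc0.le]
    simp only [norm_one, one_mul]
    rw [← Real.rpow_natCast (c ^ (1 / (2:ℝ≥0∞).toReal)) 2, ← Real.rpow_mul hc0.le]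
    norm_num
  have hub : (⟪T f, f⟫_ℂ).re ≤ ‖T‖ * c := by
    calc (⟪T f, f⟫_ℂ).re ≤ ‖(⟪T f, f⟫_ℂ)‖ := by
          exact Complex.re_le_norm _
      _ ≤ ‖T f‖ * ‖f‖ := norm_inner_le_norm _ _
      _ ≤ ‖T‖ * ‖f‖ * ‖f‖ := mul_le_mul_of_nonneg_right (T.le_opNorm f) (norm_nonneg f)
      _ = ‖T‖ * ‖f‖ ^ 2 := by ring
      _ = ‖T‖ * c := by rw [hfn]
  have hfinal : a lam * c ≤ ‖T‖ := by
    have := hlb.trans hub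
    nlinarith
  rw [hc] at hfinal
  linarith
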